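/- Let W_0, W_1 be events and b a uniformly random bit on a probability space, with W_0, W_1 possibly depending on b. If for some p' we have Pr[W_0' ∧ W_1'] = p' where Pr[W_0'] = Pr[W_0 | b = 0] and Pr[W_1'] = Pr[W_1 | b = 1], then Pr[W_0 ∧ W_1] ≤ 1/2 + p'/2. -/
import Mathlib


open MeasureTheory ProbabilityTheory

/-- If `p' = Pr[W₀' ∧ W₁']` with `Pr[W₀'] = Pr[W₀ | b = 0]` and `Pr[W₁'] = Pr[W₁ | b = 1]`
for a uniform bit `b`, then `Pr[W₀ ∧ W₁] ≤ 1/2 + p'/2`. -/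
theorem stmt_3 {Ω Ω' : Type*} [MeasurableSpace Ω] [MeasurableSpace Ω']
    (μ : Measure Ω) [IsProbabilityMeasure μ] (μ' : Measure Ω') [IsProbabilityMeasure μ']
    (W₀ W₁ : Set Ω) (hW₀ : MeasurableSet W₀) (hW₁ : MeasurableSet W₁)
    (W₀' W₁' : Set Ω') (hW₀' : MeasurableSet W₀') (hW₁' : MeasurableSet W₁')
    (b : Ω → Bool) (hb : Measurable b)
    (hb0 : μ (b ⁻¹' {false}) = 1/2) (hb1 : μ (b ⁻¹' {true}) = 1/2)
    (p' : ENNReal) (hp' : μ' (W₀' ∩ W₁') = p')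
    (h0 : μ' W₀' = (μ[|b ⁻¹' {false}]) W₀)
    (h1 : μ' W₁' = (μ[|b ⁻¹' {true}]) W₁) :
    μ (W₀ ∩ W₁) ≤ 1/2 + p'/2 := by
  rw [cond_apply (hb (measurableSet_singleton false)), hb0] at h0
  rw [cond_apply (hb (measurableSet_singleton true)), hb1] at h1
  have hinv : (1/2 : ENNReal)⁻¹ = 2 := by simp
  rw [hinv] at h0 h1
  have hcover : W₀ ∩ W₁ ⊆ (b ⁻¹' {false} ∩ W₀) ∪ (b ⁻¹' {true} ∩ W₁) := by
    intro x hx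
    cases hxb : b x
    · exact Or.inl ⟨hxb, hx.1⟩
    · exact Or.inr ⟨hxb, hx.2⟩
  have hle : μ (W₀ ∩ W₁) ≤ μ (b ⁻¹' {false} ∩ W₀) + μ (b ⁻¹' {true} ∩ W₁) :=
    le_trans (measure_mono hcover) (measure_union_le _ _)
  have hsum : μ' W₀' + μ' W₁' ≤ 1 + p' := by
    have := measure_union_add_inter (μ := μ') W₀' hW₁'
    calc μ' W₀' + μ' W₁' = μ' (W₀' ∪ W₁') + μ' (W₀' ∩ W₁') := this.symm
      _ ≤ 1 + p' := add_le_add (prob_le_one) (le_of_eq hp')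
  calc μ (W₀ ∩ W₁) ≤ μ (b ⁻¹' {false} ∩ W₀) + μ (b ⁻¹' {true} ∩ W₁) := hle
    _ = μ' W₀' / 2 + μ' W₁' / 2 := by
        rw [h0, h1]
        have h2 : ∀ x : ENNReal, 2 * x / 2 = x := fun x => by
          rw [mul_comm, mul_div_assoc, ENNReal.div_self (by norm_num) (by norm_num), mul_one]
        rw [h2, h2]
    _ = (μ' W₀' + μ' W₁') / 2 := by rw [ENNReal.add_div]
    _ ≤ (1 + p') / 2 := by exact ENNReal.div_le_div_right hsum 2
    _ = 1/2 + p'/2 := by rw [ENNReal.add_div]
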